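/- Let n ≥ 3 be an integer and let (λ_k)_{k∈ℕ} be a sequence of nonzero real numbers such that for every R > 0 the set {k : |λ_k| ≤ R} is finite. Define N_±(λ) := #{k : 0 < ±λ_k < λ} for λ > 0, and suppose there exist real numbers a, b and a constant C > 0 with |N_±(λ) − a λⁿ ∓ b λ^{n−1}| ≤ C λ^{n−2} for all λ ≥ 1. Then there exists a function F, holomorphic on the half-plane {s ∈ ℂ : Re s > n − 2}, such that for every s with Re s > n one has Σ_k sgn(λ_k)·|λ_k|^{−s} = 2(n−1)b/(s − (n−1)) + F(s). In particular, the eta function extends meromorphically to Re s > n − 2, is holomorphic at s = n, and has at most a simple pole at s = n − 1 with residue 2(n−1)b. -/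

import Mathlib

section EtaAuxSection

open Set MeasureTheory Filter
open scoped ENNReal NNReal Topology

namespace EtaAux

noncomputable def cnt (mu : ℕ → ℝ) (t : ℝ) : ℕ := Nat.card {k | 0 < mu k ∧ mu k < t}

lemma cnt_set_subset (mu : ℕ → ℝ) (t : ℝ) :
    {k | 0 < mu k ∧ mu k < t} ⊆ {k | |mu k| ≤ t} := by
  intro k hk
  simp only [mem_setOf_eq] at *
  rw [abs_of_pos hk.1]; exact hk.2.le

lemma cnt_finite {mu : ℕ → ℝ} (hfin : ∀ R : ℝ, 0 < R → {k : ℕ | |mu k| ≤ R}.Finite)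
    (t : ℝ) : {k | 0 < mu k ∧ mu k < t}.Finite := by
  rcases le_or_gt t 0 with ht | ht
  · convert Set.finite_empty
    ext k; simp only [mem_setOf_eq, mem_empty_iff_false, iff_false]
    rintro ⟨h1, h2⟩; exact absurd (h1.trans h2) (not_lt.2 ht)
  · exact (hfin t ht).subset (cnt_set_subset mu t)

lemma cnt_mono {mu : ℕ → ℝ} (hfin : ∀ R : ℝ, 0 < R → {k : ℕ | |mu k| ≤ R}.Finite) :
    Monotone (cnt mu) := by
  intro t1 t2 h
  exact Nat.card_mono (cnt_finite hfin t2) (fun k hk => ⟨hk.1, hk.2.trans_le h⟩)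

lemma cnt_zero {mu : ℕ → ℝ} {δ t : ℝ} (hδ : ∀ u ≤ δ, ∀ k, ¬ |mu k| < u) (ht : t ≤ δ) :
    cnt mu t = 0 := by
  unfold cnt
  have : {k | 0 < mu k ∧ mu k < t} = ∅ := by
    ext k; simp only [mem_setOf_eq, mem_empty_iff_false, iff_false]
    rintro ⟨h1, h2⟩
    exact hδ t ht k (by rw [abs_of_pos h1]; exact h2)
  rw [this]; simp


lemma exists_gap {Λ : ℕ → ℝ} (hnz : ∀ k, Λ k ≠ 0)
    (hfin : ∀ R : ℝ, 0 < R → {k : ℕ | |Λ k| ≤ R}.Finite) :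
    ∃ δ : ℝ, 0 < δ ∧ δ ≤ 1 ∧ ∀ u ≤ δ, ∀ k, ¬ |Λ k| < u := by
  classical
  set S : Finset ℕ := (hfin 1 one_pos).toFinset with hS
  by_cases hne : S.Nonempty
  · refine ⟨S.inf' hne (fun k => |Λ k|), ?_, ?_, ?_⟩
    · rcases Finset.exists_mem_eq_inf' hne (fun k => |Λ k|) with ⟨k, _, hk⟩
      rw [hk]
      exact abs_pos.2 (hnz k)
    · rcases Finset.exists_mem_eq_inf' hne (fun k => |Λ k|) with ⟨k, hkS, hk⟩
      rw [hk]
      have : k ∈ {k : ℕ | |Λ k| ≤ 1} := by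
        have := hkS
        rwa [hS, Set.Finite.mem_toFinset] at this
      exact this
    · intro u hu k hk
      have hk1 : |Λ k| ≤ 1 := le_of_lt <| by
        calc |Λ k| < u := hk
        _ ≤ S.inf' hne (fun k => |Λ k|) := hu
        _ ≤ 1 := by
            rcases Finset.exists_mem_eq_inf' hne (fun k => |Λ k|) with ⟨j, hjS, hj⟩
            rw [hj]
            have : j ∈ {k : ℕ | |Λ k| ≤ 1} := by rwa [hS, Set.Finite.mem_toFinset] at hjS
            exact this
      have hkS : k ∈ S := by rw [hS, Set.Finite.mem_toFinset]; exact hk1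
      have : S.inf' hne (fun k => |Λ k|) ≤ |Λ k| := Finset.inf'_le _ hkS
      exact absurd (hk.trans_le hu) (not_lt.2 this)
  · refine ⟨1, one_pos, le_refl 1, fun u hu k hk => ?_⟩
    have : k ∈ S := by
      rw [hS, Set.Finite.mem_toFinset]
      exact (hk.trans_le hu).le
    exact hne ⟨k, this⟩

/-- Growth bound: `cnt mu t ≤ K * (max t 1)^n`. -/
lemma cnt_bound {mu : ℕ → ℝ} (hfin : ∀ R : ℝ, 0 < R → {k : ℕ | |mu k| ≤ R}.Finite)
    {a b C : ℝ} {n : ℕ}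
    (hb : ∀ lam : ℝ, 1 ≤ lam →
      |(cnt mu lam : ℝ) - a * lam ^ n - b * lam ^ (n - 1)| ≤ C * lam ^ (n - 2)) (t : ℝ) :
    (cnt mu t : ℝ) ≤ (|a| + |b| + |C|) * max t 1 ^ n := by
  set K := |a| + |b| + |C| with hK
  have key : ∀ lam : ℝ, 1 ≤ lam → (cnt mu lam : ℝ) ≤ K * lam ^ n := by
    intro lam hlam
    have h0 : (0:ℝ) < lam := lt_of_lt_of_le one_pos hlam
    have h1 := (abs_le.1 (hb lam hlam)).2
    have hpow1 : lam ^ (n-1) ≤ lam ^ n := pow_le_pow_right₀ hlam (Nat.sub_le n 1)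
    have hpow2 : lam ^ (n-2) ≤ lam ^ n := pow_le_pow_right₀ hlam (Nat.sub_le n 2)
    have hpn : (0:ℝ) < lam ^ n := pow_pos h0 n
    have hpn1 : (0:ℝ) < lam ^ (n-1) := pow_pos h0 _
    have hpn2 : (0:ℝ) < lam ^ (n-2) := pow_pos h0 _
    calc (cnt mu lam : ℝ) ≤ a * lam ^ n + b * lam ^ (n-1) + C * lam ^ (n-2) := by linarith
    _ ≤ |a| * lam ^ n + |b| * lam ^ (n-1) + |C| * lam ^ (n-2) := by
        gcongr <;> exact le_abs_self _
    _ ≤ |a| * lam ^ n + |b| * lam ^ n + |C| * lam ^ n := by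
        gcongr <;> first | exact abs_nonneg _ | skip
    _ = K * lam ^ n := by rw [hK]; ring
  rcases le_or_gt t 1 with ht | ht
  · have h1 : (cnt mu t : ℝ) ≤ (cnt mu 1 : ℝ) := by
      exact_mod_cast cnt_mono hfin ht
    have h2 := key 1 le_rfl
    rw [max_eq_right ht, one_pow]
    simpa using h1.trans h2
  · rw [max_eq_left ht.le]
    exact key t ht.le

/-- The difference of counting functions, as a complex number. -/
noncomputable def D (Λ : ℕ → ℝ) (t : ℝ) : ℂ :=
  ((cnt Λ t : ℝ) : ℂ) - ((cnt (fun k => -Λ k) t : ℝ) : ℂ)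

lemma abs_lt_finite {Λ : ℕ → ℝ} (hfin : ∀ R : ℝ, 0 < R → {k : ℕ | |Λ k| ≤ R}.Finite)
    {t : ℝ} (ht : 0 < t) : {k : ℕ | |Λ k| < t}.Finite :=
  (hfin t ht).subset (fun k hk => show |Λ k| ≤ t from le_of_lt hk)

lemma tsum_sign_eq {Λ : ℕ → ℝ} (hnz : ∀ k, Λ k ≠ 0)
    (hfin : ∀ R : ℝ, 0 < R → {k : ℕ | |Λ k| ≤ R}.Finite) {t : ℝ} (ht : 0 < t) :
    ∑' k, (if |Λ k| < t then (Real.sign (Λ k) : ℂ) else 0) = D Λ t := by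
  classical
  set S : Finset ℕ := (abs_lt_finite hfin ht).toFinset with hS
  have hmem : ∀ k, k ∈ S ↔ |Λ k| < t := by
    intro k; rw [hS, Set.Finite.mem_toFinset]; rfl
  rw [tsum_eq_sum (s := S) (fun k hk => if_neg (fun h => hk ((hmem k).2 h)))]
  have hsum : ∑ k ∈ S, (if |Λ k| < t then (Real.sign (Λ k) : ℂ) else 0)
      = ∑ k ∈ S, (Real.sign (Λ k) : ℂ) :=
    Finset.sum_congr rfl (fun k hk => if_pos ((hmem k).1 hk))
  rw [hsum, ← Finset.sum_filter_add_sum_filter_not S (fun k => 0 < Λ k)]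
  have hpos : ∑ k ∈ S.filter (fun k => 0 < Λ k), (Real.sign (Λ k) : ℂ)
      = ((S.filter (fun k => 0 < Λ k)).card : ℂ) := by
    rw [Finset.sum_congr rfl (fun k hk => ?_), Finset.sum_const, nsmul_eq_mul, mul_one]
    rw [Real.sign_of_pos (Finset.mem_filter.1 hk).2]
    norm_num
  have hneg : ∑ k ∈ S.filter (fun k => ¬ 0 < Λ k), (Real.sign (Λ k) : ℂ)
      = -((S.filter (fun k => ¬ 0 < Λ k)).card : ℂ) := by
    rw [Finset.sum_congr rfl (fun k hk => ?_), Finset.sum_const, nsmul_eq_mul, mul_neg_one]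
    have h1 : Λ k < 0 := lt_of_le_of_ne (not_lt.1 (Finset.mem_filter.1 hk).2) (hnz k)
    rw [Real.sign_of_neg h1]
    norm_num
  have hcard1 : cnt Λ t = (S.filter (fun k => 0 < Λ k)).card := by
    have : {k | 0 < Λ k ∧ Λ k < t} = ↑(S.filter (fun k => 0 < Λ k)) := by
      ext k
      simp only [Finset.coe_filter, mem_setOf_eq, hmem]
      constructor
      · rintro ⟨h1, h2⟩; exact ⟨by rwa [abs_of_pos h1], h1⟩
      · rintro ⟨h1, h2⟩; exact ⟨h2, by rwa [abs_of_pos h2] at h1⟩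
    rw [cnt, this, ← Set.ncard_coe_finset, Nat.card_coe_set_eq]
  have hcard2 : cnt (fun k => -Λ k) t = (S.filter (fun k => ¬ 0 < Λ k)).card := by
    have : {k | 0 < -Λ k ∧ -Λ k < t} = ↑(S.filter (fun k => ¬ 0 < Λ k)) := by
      ext k
      simp only [Finset.coe_filter, mem_setOf_eq, hmem]
      constructor
      · rintro ⟨h1, h2⟩
        refine ⟨by rwa [abs_of_neg (by linarith)], by linarith⟩
      · rintro ⟨h1, h2⟩
        have h3 : Λ k < 0 := lt_of_le_of_ne (not_lt.1 h2) (hnz k)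
        exact ⟨by linarith, by rwa [abs_of_neg h3] at h1⟩
    rw [cnt, this, ← Set.ncard_coe_finset, Nat.card_coe_set_eq]
  rw [hpos, hneg, D, hcard1, hcard2]
  push_cast
  ring

lemma tsum_indicator_le {Λ : ℕ → ℝ} (hnz : ∀ k, Λ k ≠ 0)
    (hfin : ∀ R : ℝ, 0 < R → {k : ℕ | |Λ k| ≤ R}.Finite) {t : ℝ} (ht : 0 < t) :
    ∑' k, (if |Λ k| < t then (1 : ℝ≥0∞) else 0)
      ≤ (cnt Λ t : ℝ≥0∞) + (cnt (fun k => -Λ k) t : ℝ≥0∞) := by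
  classical
  set S : Finset ℕ := (abs_lt_finite hfin ht).toFinset with hS
  have hmem : ∀ k, k ∈ S ↔ |Λ k| < t := by
    intro k; rw [hS, Set.Finite.mem_toFinset]; rfl
  rw [tsum_eq_sum (s := S) (fun k hk => if_neg (fun h => hk ((hmem k).2 h)))]
  have h1 : ∑ k ∈ S, (if |Λ k| < t then (1:ℝ≥0∞) else 0) ≤ ∑ k ∈ S, 1 :=
    Finset.sum_le_sum (fun k _ => by split <;> simp)
  refine h1.trans ?_
  rw [Finset.sum_const, nsmul_eq_mul, mul_one]
  have hcard : S.card ≤ cnt Λ t + cnt (fun k => -Λ k) t := by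
    have hsplit : S ⊆ S.filter (fun k => 0 < Λ k) ∪ S.filter (fun k => ¬ 0 < Λ k) := by
      intro k hk
      rw [Finset.mem_union, Finset.mem_filter, Finset.mem_filter]
      by_cases h : 0 < Λ k
      · exact Or.inl ⟨hk, h⟩
      · exact Or.inr ⟨hk, h⟩
    have h2 := (Finset.card_le_card hsplit).trans (Finset.card_union_le _ _)
    refine h2.trans (Nat.add_le_add ?_ ?_)
    · rw [← Set.ncard_coe_finset, ← Nat.card_coe_set_eq]
      refine Nat.card_mono (cnt_finite hfin t) (fun k hk => ?_)
      rw [Finset.mem_coe, Finset.mem_filter] at hk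
      obtain ⟨hk1, hk2⟩ := hk
      exact ⟨hk2, by have := (hmem k).1 hk1; rwa [abs_of_pos hk2] at this⟩
    · rw [← Set.ncard_coe_finset, ← Nat.card_coe_set_eq]
      refine Nat.card_mono (cnt_finite (mu := fun k => -Λ k)
        (by simpa only [abs_neg] using hfin) t) (fun k hk => ?_)
      rw [Finset.mem_coe, Finset.mem_filter] at hk
      obtain ⟨hk1, hk2⟩ := hk
      have h3 : Λ k < 0 := lt_of_le_of_ne (not_lt.1 hk2) (hnz k)
      have := (hmem k).1 hk1
      rw [abs_of_neg h3] at this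
      exact ⟨by simp only [mem_setOf_eq]; linarith, this⟩
  calc (S.card : ℝ≥0∞) ≤ ((cnt Λ t + cnt (fun k => -Λ k) t : ℕ) : ℝ≥0∞) := by
        exact_mod_cast Nat.cast_le.2 hcard
  _ = (cnt Λ t : ℝ≥0∞) + (cnt (fun k => -Λ k) t : ℝ≥0∞) := by push_cast; rfl

/-- The regularized density function. -/
noncomputable def ffun (Λ : ℕ → ℝ) (b : ℝ) (n : ℕ) (t : ℝ) : ℂ :=
  if t ≤ 1 then D Λ t else D Λ t - ((2 * b * t ^ (n-1) : ℝ) : ℂ)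

lemma hfin_neg {Λ : ℕ → ℝ} (hfin : ∀ R : ℝ, 0 < R → {k : ℕ | |Λ k| ≤ R}.Finite) :
    ∀ R : ℝ, 0 < R → {k : ℕ | |(fun k => -Λ k) k| ≤ R}.Finite := by
  simpa only [abs_neg] using hfin

lemma measurable_cnt {mu : ℕ → ℝ} (hfin : ∀ R : ℝ, 0 < R → {k : ℕ | |mu k| ≤ R}.Finite) :
    Measurable (fun t => (cnt mu t : ℝ)) :=
  Measurable.of_discrete.comp (cnt_mono hfin).measurable

lemma measurable_D {Λ : ℕ → ℝ} (hfin : ∀ R : ℝ, 0 < R → {k : ℕ | |Λ k| ≤ R}.Finite) :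
    Measurable (D Λ) := by
  apply Measurable.sub
  · exact Complex.measurable_ofReal.comp (measurable_cnt hfin)
  · exact Complex.measurable_ofReal.comp (measurable_cnt (hfin_neg hfin))

lemma measurable_ffun {Λ : ℕ → ℝ} (hfin : ∀ R : ℝ, 0 < R → {k : ℕ | |Λ k| ≤ R}.Finite)
    (b : ℝ) (n : ℕ) : Measurable (ffun Λ b n) := by
  unfold ffun
  apply Measurable.ite
  · exact measurableSet_Iic
  · exact measurable_D hfin
  · exact (measurable_D hfin).sub
      (Complex.measurable_ofReal.comp (by fun_prop))

lemma norm_D_le {Λ : ℕ → ℝ} (t : ℝ) :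
    ‖D Λ t‖ ≤ (cnt Λ t : ℝ) + (cnt (fun k => -Λ k) t : ℝ) := by
  rw [D]
  refine (norm_sub_le _ _).trans ?_
  simp only [Complex.norm_real, Real.norm_natCast]
  push_cast
  simp

lemma norm_ffun_le {Λ : ℕ → ℝ} {b : ℝ} {n : ℕ}
    (hfin : ∀ R : ℝ, 0 < R → {k : ℕ | |Λ k| ≤ R}.Finite) {t M : ℝ}
    (h0 : 0 ≤ t) (hM : t ≤ M) :
    ‖ffun Λ b n t‖ ≤ (cnt Λ M : ℝ) + (cnt (fun k => -Λ k) M : ℝ) + 2 * |b| * M ^ (n-1) := by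
  have hcnt : (cnt Λ t : ℝ) + (cnt (fun k => -Λ k) t : ℝ)
      ≤ (cnt Λ M : ℝ) + (cnt (fun k => -Λ k) M : ℝ) := by
    have h1 : cnt Λ t ≤ cnt Λ M := cnt_mono hfin hM
    have h2 : cnt (fun k => -Λ k) t ≤ cnt (fun k => -Λ k) M := cnt_mono (hfin_neg hfin) hM
    push_cast
    exact add_le_add (Nat.cast_le.2 h1) (Nat.cast_le.2 h2)
  have hM0 : (0:ℝ) ≤ M := h0.trans hM
  have hb : (0:ℝ) ≤ 2 * |b| * M ^ (n-1) := mul_nonneg (by positivity) (pow_nonneg hM0 _)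
  rw [ffun]
  split
  · exact (norm_D_le t).trans (by linarith)
  · refine (norm_sub_le _ _).trans ?_
    have h3 : ‖((2 * b * t ^ (n-1) : ℝ) : ℂ)‖ ≤ 2 * |b| * M ^ (n-1) := by
      rw [Complex.norm_real, Real.norm_eq_abs, abs_mul, abs_mul]
      have : |t ^ (n-1)| ≤ M ^ (n-1) := by
        rw [abs_pow, abs_of_nonneg h0]
        exact pow_le_pow_left₀ h0 hM _
      calc |2| * |b| * |t ^ (n-1)| = 2 * |b| * |t ^ (n-1)| := by norm_num
      _ ≤ 2 * |b| * M ^ (n-1) := mul_le_mul_of_nonneg_left this (by positivity)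
    have := (norm_D_le (Λ := Λ) t).trans hcnt
    linarith

lemma locInt_ffun {Λ : ℕ → ℝ} (hfin : ∀ R : ℝ, 0 < R → {k : ℕ | |Λ k| ≤ R}.Finite)
    (b : ℝ) (n : ℕ) : LocallyIntegrableOn (ffun Λ b n) (Ioi 0) := by
  intro x hx
  rw [mem_Ioi] at hx
  refine ⟨Ioc 0 (x+1), ?_, ?_⟩
  · refine mem_nhdsWithin.2 ⟨Iio (x+1), isOpen_Iio, lt_add_one x, ?_⟩
    intro y hy
    exact ⟨hy.2, le_of_lt hy.1⟩
  · apply Measure.integrableOn_of_bounded (M := (cnt Λ (x+1) : ℝ)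
      + (cnt (fun k => -Λ k) (x+1) : ℝ) + 2 * |b| * (x+1) ^ (n-1))
    · rw [Real.volume_Ioc]; exact ENNReal.ofReal_ne_top
    · exact (measurable_ffun hfin b n).aestronglyMeasurable
    · refine (ae_restrict_iff' measurableSet_Ioc).2 (ae_of_all _ (fun t ht => ?_))
      exact norm_ffun_le hfin ht.1.le ht.2

lemma ffun_eq_zero {Λ : ℕ → ℝ} {b : ℝ} {n : ℕ} {δ t : ℝ}
    (hδ1 : δ ≤ 1) (hδ : ∀ u ≤ δ, ∀ k, ¬ |Λ k| < u) (ht : t ≤ δ) :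
    ffun Λ b n t = 0 := by
  rw [ffun, if_pos (ht.trans hδ1), D, cnt_zero hδ ht,
    cnt_zero (mu := fun k => -Λ k) (by simpa only [abs_neg] using hδ) ht]
  simp

lemma ffun_isBigO_zero {Λ : ℕ → ℝ} {b : ℝ} {n : ℕ} {δ : ℝ} (hδ0 : 0 < δ)
    (hδ1 : δ ≤ 1) (hδ : ∀ u ≤ δ, ∀ k, ¬ |Λ k| < u) (c : ℝ) :
    ffun Λ b n =O[𝓝[>] (0:ℝ)] (fun t : ℝ => t ^ c) := by
  have hev : ffun Λ b n =ᶠ[𝓝[>] (0:ℝ)] (fun _ => (0:ℂ)) := by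
    filter_upwards [Ioo_mem_nhdsGT_of_mem (by constructor <;> [exact le_refl 0; exact hδ0])]
      with t ht
    exact ffun_eq_zero hδ1 hδ ht.2.le
  exact hev.trans_isBigO (Asymptotics.isBigO_zero _ _)

lemma ffun_isBigO_atTop {Λ : ℕ → ℝ} {a b C : ℝ} {n : ℕ} (hn : 3 ≤ n)
    (hplus : ∀ lam : ℝ, 1 ≤ lam →
      |(cnt Λ lam : ℝ) - a * lam ^ n - b * lam ^ (n - 1)| ≤ C * lam ^ (n - 2))
    (hminus : ∀ lam : ℝ, 1 ≤ lam →
      |(cnt (fun k => -Λ k) lam : ℝ) - a * lam ^ n + b * lam ^ (n - 1)| ≤ C * lam ^ (n - 2)) :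
    ffun Λ b n =O[atTop] (fun t : ℝ => t ^ ((n:ℝ) - 2)) := by
  refine Asymptotics.IsBigO.of_bound (2*C) ?_
  filter_upwards [eventually_gt_atTop (1:ℝ)] with t ht
  have ht0 : (0:ℝ) < t := lt_trans one_pos ht
  have h1 := hplus t ht.le
  have h2 := hminus t ht.le
  have hnorm : ‖ffun Λ b n t‖
      = |((cnt Λ t : ℝ) - (cnt (fun k => -Λ k) t : ℝ)) - 2*b*t^(n-1)| := by
    rw [ffun, if_neg (not_le.2 ht), D]
    rw [show ((cnt Λ t : ℝ) : ℂ) - ((cnt (fun k => -Λ k) t : ℝ) : ℂ)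
        - ((2 * b * t ^ (n-1) : ℝ) : ℂ)
        = ((((cnt Λ t : ℝ) - (cnt (fun k => -Λ k) t : ℝ)) - 2*b*t^(n-1) : ℝ) : ℂ) by push_cast; ring]
    rw [Complex.norm_real, Real.norm_eq_abs]
  rw [hnorm]
  have key : |((cnt Λ t : ℝ) - (cnt (fun k => -Λ k) t : ℝ)) - 2*b*t^(n-1)|
      ≤ 2 * C * t ^ (n-2) := by
    have : ((cnt Λ t : ℝ) - (cnt (fun k => -Λ k) t : ℝ)) - 2*b*t^(n-1)
        = ((cnt Λ t : ℝ) - a * t^n - b * t^(n-1))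
          - ((cnt (fun k => -Λ k) t : ℝ) - a * t^n + b * t^(n-1)) := by ring
    rw [this]
    calc |((cnt Λ t : ℝ) - a * t^n - b * t^(n-1))
          - ((cnt (fun k => -Λ k) t : ℝ) - a * t^n + b * t^(n-1))|
        ≤ |(cnt Λ t : ℝ) - a * t^n - b * t^(n-1)|
          + |(cnt (fun k => -Λ k) t : ℝ) - a * t^n + b * t^(n-1)| := abs_sub _ _
    _ ≤ C * t^(n-2) + C * t^(n-2) := add_le_add h1 h2
    _ = 2 * C * t^(n-2) := by ring
  refine key.trans (le_of_eq ?_)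
  have hcast : t ^ ((n:ℝ) - 2) = t ^ (n-2 : ℕ) := by
    rw [← Real.rpow_natCast t (n-2)]
    congr 1
    have : ((n - 2 : ℕ) : ℝ) = (n:ℝ) - 2 := by
      have h2n : 2 ≤ n := le_trans (by norm_num) hn
      push_cast [Nat.cast_sub h2n]
      ring
    rw [this]
  rw [Real.norm_eq_abs, abs_of_nonneg (Real.rpow_nonneg ht0.le _), hcast]

lemma nnnorm_sign {x : ℝ} (hx : x ≠ 0) : ‖(Real.sign x : ℂ)‖ = 1 := by
  rcases lt_or_gt_of_ne hx with h | h
  · rw [Real.sign_of_neg h]; norm_num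
  · rw [Real.sign_of_pos h]; norm_num

lemma sum_lintegral_ne_top {Λ : ℕ → ℝ} {a b C : ℝ} {n : ℕ} {s : ℂ} (hn : 3 ≤ n)
    (hnz : ∀ k, Λ k ≠ 0)
    (hfin : ∀ R : ℝ, 0 < R → {k : ℕ | |Λ k| ≤ R}.Finite)
    (hplus : ∀ lam : ℝ, 1 ≤ lam →
      |(cnt Λ lam : ℝ) - a * lam ^ n - b * lam ^ (n - 1)| ≤ C * lam ^ (n - 2))
    (hminus : ∀ lam : ℝ, 1 ≤ lam →
      |(cnt (fun k => -Λ k) lam : ℝ) - a * lam ^ n + b * lam ^ (n - 1)| ≤ C * lam ^ (n - 2))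
    (hs : (n:ℝ) < s.re) :
    ∑' k, ∫⁻ t in Ioi (0:ℝ),
      ‖(Real.sign (Λ k) : ℂ) * (Ioi |Λ k|).indicator (fun u : ℝ => (u:ℂ)^(-s-1)) t‖₊ ≠ ∞ := by
  obtain ⟨δ, hδ0, hδ1, hδ⟩ := exists_gap hnz hfin
  set K : ℝ := |a| + |b| + |C| with hKdef
  have hK0 : 0 ≤ K := by positivity
  have hσ0 : (0:ℝ) < s.re := by have : (0:ℝ) ≤ (n:ℝ) := Nat.cast_nonneg n; linarith
  set ψ : ℝ → ℝ := (Ioi δ).indicator (fun t => (2*K*(max t 1)^n) * t^(-s.re-1)) with hψdef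
  -- integrability of the dominating function
  have hJ2 : IntegrableOn (fun t : ℝ => (2*K*(max t 1)^n) * t^(-s.re-1)) (Ioi 1) := by
    have base : IntegrableOn (fun t : ℝ => t ^ ((n:ℝ) - s.re - 1)) (Ioi 1) :=
      integrableOn_Ioi_rpow_of_lt (by linarith) one_pos
    have h2 : IntegrableOn (fun t : ℝ => 2*K * t ^ ((n:ℝ) - s.re - 1)) (Ioi 1) :=
      base.const_mul _
    refine h2.congr_fun (fun t ht => ?_) measurableSet_Ioi
    rw [mem_Ioi] at ht
    have ht0 : (0:ℝ) < t := lt_trans one_pos ht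
    rw [max_eq_left ht.le]
    beta_reduce
    rw [show (n:ℝ) - s.re - 1 = (n:ℝ) + (-s.re-1) by ring, Real.rpow_add ht0,
      Real.rpow_natCast]
    ring
  have hJ1 : IntegrableOn (fun t : ℝ => (2*K*(max t 1)^n) * t^(-s.re-1)) (Ioc δ 1) := by
    have hcont : ContinuousOn (fun t : ℝ => (2*K*(max t 1)^n) * t^(-s.re-1)) (Icc δ 1) := by
      intro x hx
      have hx0 : x ≠ 0 := ne_of_gt (lt_of_lt_of_le hδ0 hx.1)
      exact (((continuous_const.mul ((continuous_max.comp
        (continuous_id.prodMk continuous_const)).pow n)).continuousAt).mul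
        (Real.continuousAt_rpow_const x _ (Or.inl hx0))).continuousWithinAt
    exact (hcont.integrableOn_Icc).mono_set Ioc_subset_Icc_self
  have hJ : IntegrableOn (fun t : ℝ => (2*K*(max t 1)^n) * t^(-s.re-1)) (Ioi δ) := by
    rw [← Ioc_union_Ioi_eq_Ioi hδ1]
    exact hJ1.union hJ2
  have hψint : Integrable ψ := (integrable_indicator_iff measurableSet_Ioi).2 hJ
  have hψfin : ∫⁻ t in Ioi (0:ℝ), ENNReal.ofReal (ψ t) < ∞ :=
    (hψint.restrict (s := Ioi 0)).lintegral_lt_top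
  -- measurability
  have hmeas : ∀ k : ℕ, AEMeasurable (fun t : ℝ =>
      (‖(Real.sign (Λ k) : ℂ) * (Ioi |Λ k|).indicator (fun u : ℝ => (u:ℂ)^(-s-1)) t‖₊ : ℝ≥0∞))
      (volume.restrict (Ioi (0:ℝ))) := by
    intro k
    have hc : ContinuousOn (fun u : ℝ => (u:ℂ)^(-s-1)) (Ioi 0) := by
      intro x hx
      exact (Complex.continuousAt_ofReal_cpow_const _ _
        (Or.inr (ne_of_gt (mem_Ioi.1 hx)))).continuousWithinAt
    exact ((((hc.aestronglyMeasurable measurableSet_Ioi).indicator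
      measurableSet_Ioi).const_mul _).enorm)
  rw [← lintegral_tsum hmeas]
  -- pointwise bound
  have hpt : ∀ t ∈ Ioi (0:ℝ),
      (∑' k, (‖(Real.sign (Λ k) : ℂ)
          * (Ioi |Λ k|).indicator (fun u : ℝ => (u:ℂ)^(-s-1)) t‖₊ : ℝ≥0∞))
        ≤ ENNReal.ofReal (ψ t) := by
    intro t ht
    rw [mem_Ioi] at ht
    have hterm : ∀ k, (‖(Real.sign (Λ k) : ℂ)
        * (Ioi |Λ k|).indicator (fun u : ℝ => (u:ℂ)^(-s-1)) t‖₊ : ℝ≥0∞)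
        = (‖(t:ℂ)^(-s-1)‖₊ : ℝ≥0∞) * (if |Λ k| < t then (1:ℝ≥0∞) else 0) := by
      intro k
      by_cases hk : |Λ k| < t
      · rw [if_pos hk, indicator_of_mem (mem_Ioi.2 hk), mul_one, nnnorm_mul]
        have h1 : ‖(Real.sign (Λ k) : ℂ)‖₊ = 1 := by
          ext; exact nnnorm_sign (hnz k)
        rw [h1, one_mul]
      · rw [if_neg hk, indicator_of_notMem (fun h => hk (mem_Ioi.1 h)), mul_zero, mul_zero]
        simp
    calc ∑' k, (‖(Real.sign (Λ k) : ℂ)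
          * (Ioi |Λ k|).indicator (fun u : ℝ => (u:ℂ)^(-s-1)) t‖₊ : ℝ≥0∞)
        = (‖(t:ℂ)^(-s-1)‖₊ : ℝ≥0∞) * ∑' k, (if |Λ k| < t then (1:ℝ≥0∞) else 0) := by
          rw [← ENNReal.tsum_mul_left]
          exact tsum_congr hterm
    _ ≤ (‖(t:ℂ)^(-s-1)‖₊ : ℝ≥0∞) * ((cnt Λ t : ℝ≥0∞) + (cnt (fun k => -Λ k) t : ℝ≥0∞)) :=
          mul_le_mul_right (tsum_indicator_le hnz hfin ht) _
    _ ≤ ENNReal.ofReal (ψ t) := by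
          rcases le_or_gt t δ with htδ | htδ
          · rw [cnt_zero hδ htδ, cnt_zero (mu := fun k => -Λ k)
              (by simpa only [abs_neg] using hδ) htδ]
            simp
          · have hnorm : (‖(t:ℂ)^(-s-1)‖₊ : ℝ≥0∞) = ENNReal.ofReal (t ^ (-s.re-1)) := by
              rw [← enorm_eq_nnnorm, ← ofReal_norm,
                Complex.norm_cpow_eq_rpow_re_of_pos ht]
              norm_num [Complex.sub_re, Complex.neg_re, Complex.one_re]
            have hcnt1 : (cnt Λ t : ℝ≥0∞) ≤ ENNReal.ofReal (K * max t 1 ^ n) := by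
              rw [← ENNReal.ofReal_natCast]
              exact ENNReal.ofReal_le_ofReal (cnt_bound hfin hplus t)
            have hcnt2 : (cnt (fun k => -Λ k) t : ℝ≥0∞) ≤ ENNReal.ofReal (K * max t 1 ^ n) := by
              rw [← ENNReal.ofReal_natCast]
              have hb' : ∀ lam : ℝ, 1 ≤ lam → |(cnt (fun k => -Λ k) lam : ℝ)
                  - a * lam ^ n - (-b) * lam ^ (n - 1)| ≤ C * lam ^ (n - 2) := by
                intro lam hlam
                have := hminus lam hlam
                rw [show (cnt (fun k => -Λ k) lam : ℝ) - a * lam ^ n - (-b) * lam ^ (n-1)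
                  = (cnt (fun k => -Λ k) lam : ℝ) - a * lam ^ n + b * lam ^ (n-1) by ring]
                exact this
              have := cnt_bound (hfin_neg hfin) hb' t
              rw [show |a| + |(-b)| + |C| = K by rw [abs_neg, hKdef]] at this
              exact ENNReal.ofReal_le_ofReal this
            have hψt : ψ t = (2*K*(max t 1)^n) * t^(-s.re-1) := by
              rw [hψdef, indicator_of_mem (mem_Ioi.2 htδ)]
            rw [hψt, hnorm]
            calc ENNReal.ofReal (t ^ (-s.re-1))
                  * ((cnt Λ t : ℝ≥0∞) + (cnt (fun k => -Λ k) t : ℝ≥0∞))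
                ≤ ENNReal.ofReal (t ^ (-s.re-1)) * (ENNReal.ofReal (K * max t 1 ^ n)
                  + ENNReal.ofReal (K * max t 1 ^ n)) :=
                  mul_le_mul_right (add_le_add hcnt1 hcnt2) _
            _ = ENNReal.ofReal ((2*K*(max t 1)^n) * t^(-s.re-1)) := by
                rw [← ENNReal.ofReal_add (by positivity) (by positivity),
                  ← ENNReal.ofReal_mul (by positivity)]
                congr 1
                ring
  refine ne_of_lt (lt_of_le_of_lt ?_ hψfin)
  refine lintegral_mono_ae ?_
  rw [ae_restrict_iff' measurableSet_Ioi]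
  exact ae_of_all _ hpt

lemma integral_indicator_cpow {r : ℝ} (hr : 0 < r) {s : ℂ} (hs : 0 < s.re) :
    ∫ t in Ioi (0:ℝ), (Ioi r).indicator (fun u : ℝ => (u:ℂ)^(-s-1)) t = ((r:ℝ):ℂ)^(-s) / s := by
  rw [integral_indicator measurableSet_Ioi, Measure.restrict_restrict measurableSet_Ioi,
    inter_eq_left.2 (Ioi_subset_Ioi hr.le)]
  have ha : (-s-1).re < -1 := by
    simp only [Complex.sub_re, Complex.neg_re, Complex.one_re]
    linarith
  rw [integral_Ioi_cpow_of_lt ha hr, show -s-1+1 = -s by ring]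
  rw [neg_div, div_neg, neg_neg]

end EtaAux


end EtaAuxSection

open Complex

open Complex Set MeasureTheory Filter in
/-- Suppose the counting functions `N_±(λ) = #{k : 0 < ±λ_k < λ}` of a
sequence of nonzero real numbers `(λ_k)` (accumulating only at `±∞`) satisfy two-term
asymptotics `N_±(λ) = aλⁿ ± bλ^{n-1} + O(λ^{n-2})`, `n ≥ 3`.  Then the eta function
`η(s) = Σ_k sgn(λ_k)·|λ_k|^{-s}` (convergent for `Re s > n`) continues meromorphically to
`Re s > n - 2`: there is `F` holomorphic on `Re s > n - 2` with
`η(s) = 2(n-1)b/(s-(n-1)) + F(s)`, so `η` is holomorphic at `s = n` and has at most a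
simple pole at `s = n - 1` with residue `2(n-1)b`. -/
theorem eta_function_meromorphic_continuation_with_residue
    (n : ℕ) (hn : 3 ≤ n) (Λ : ℕ → ℝ) (hnz : ∀ k, Λ k ≠ 0)
    (hfin : ∀ R : ℝ, 0 < R → {k : ℕ | |Λ k| ≤ R}.Finite)
    (a b C : ℝ) (hC : 0 < C)
    (hplus : ∀ lam : ℝ, 1 ≤ lam →
      |(Nat.card {k : ℕ | 0 < Λ k ∧ Λ k < lam} : ℝ) - a * lam ^ n - b * lam ^ (n - 1)|
        ≤ C * lam ^ (n - 2))
    (hminus : ∀ lam : ℝ, 1 ≤ lam →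
      |(Nat.card {k : ℕ | 0 < -Λ k ∧ -Λ k < lam} : ℝ) - a * lam ^ n + b * lam ^ (n - 1)|
        ≤ C * lam ^ (n - 2)) :
    ∃ F : ℂ → ℂ, DifferentiableOn ℂ F {s : ℂ | (n : ℝ) - 2 < s.re} ∧
      ∀ s : ℂ, (n : ℝ) < s.re →
        ∑' k, (Real.sign (Λ k) : ℂ) * ((|Λ k| : ℝ) : ℂ) ^ (-s)
          = 2 * ((n : ℂ) - 1) * (b : ℂ) / (s - ((n : ℂ) - 1)) + F s := by
  classical
  obtain ⟨δ, hδ0, hδ1, hδ⟩ := EtaAux.exists_gap hnz hfin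
  have hplus' : ∀ lam : ℝ, 1 ≤ lam →
      |(EtaAux.cnt Λ lam : ℝ) - a * lam ^ n - b * lam ^ (n - 1)| ≤ C * lam ^ (n - 2) := hplus
  have hminus' : ∀ lam : ℝ, 1 ≤ lam →
      |(EtaAux.cnt (fun k => -Λ k) lam : ℝ) - a * lam ^ n + b * lam ^ (n - 1)|
        ≤ C * lam ^ (n - 2) := hminus
  set f : ℝ → ℂ := EtaAux.ffun Λ b n with hf
  have hloc : LocallyIntegrableOn f (Ioi 0) := EtaAux.locInt_ffun hfin b n
  have htop : f =O[atTop] (fun t : ℝ => t ^ ((n:ℝ) - 2)) :=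
    EtaAux.ffun_isBigO_atTop hn hplus' hminus'
  have hn3 : (3:ℝ) ≤ (n:ℝ) := by exact_mod_cast hn
  refine ⟨fun z => 2*(b:ℂ) + z * mellin f (-z), ?_, ?_⟩
  · intro z hz
    rw [mem_setOf_eq] at hz
    have hdm : DifferentiableAt ℂ (mellin f) (-z) := by
      refine mellin_differentiableAt_of_isBigO_rpow (a := 2 - (n:ℝ)) (b := -z.re - 1)
        hloc ?_ ?_ ?_ ?_
      · simpa [neg_sub] using htop
      · simp only [Complex.neg_re]; linarith
      · exact EtaAux.ffun_isBigO_zero hδ0 hδ1 hδ _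
      · simp only [Complex.neg_re]; linarith
    have hD : DifferentiableAt ℂ (fun z => 2*(b:ℂ) + z * mellin f (-z)) z := by
      apply DifferentiableAt.add (differentiableAt_const _)
      exact differentiableAt_id.mul (hdm.comp z differentiable_neg.differentiableAt)
    exact hD.differentiableWithinAt
  · intro s hs
    have hsre : 0 < s.re := by linarith
    have hs0 : s ≠ 0 := by
      intro h; rw [h] at hsre; simp at hsre
    have hw : s - ((n:ℂ) - 1) ≠ 0 := by
      intro h
      have h2 := congrArg Complex.re h
      simp only [Complex.sub_re, Complex.one_re, Complex.natCast_re, Complex.zero_re] at h2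
      linarith
    set g : ℕ → ℝ → ℂ := fun k t => (Real.sign (Λ k) : ℂ)
      * (Ioi |Λ k|).indicator (fun u : ℝ => (u:ℂ)^(-s-1)) t with hg
    have hmeas : ∀ k : ℕ, AEStronglyMeasurable (g k) (volume.restrict (Ioi (0:ℝ))) := by
      intro k
      have hc : ContinuousOn (fun u : ℝ => (u:ℂ)^(-s-1)) (Ioi 0) := fun x hx =>
        (Complex.continuousAt_ofReal_cpow_const _ _
          (Or.inr (ne_of_gt (mem_Ioi.1 hx)))).continuousWithinAt
      exact ((hc.aestronglyMeasurable measurableSet_Ioi).indicator measurableSet_Ioi).const_mul _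
    have hne := EtaAux.sum_lintegral_ne_top hn hnz hfin hplus' hminus' hs
    have step1 : ∀ k, ∫ t in Ioi (0:ℝ), g k t
        = (Real.sign (Λ k) : ℂ) * (((|Λ k| : ℝ):ℂ)^(-s) / s) := by
      intro k
      rw [hg]
      simp only
      rw [MeasureTheory.integral_const_mul,
        EtaAux.integral_indicator_cpow (abs_pos.2 (hnz k)) hsre]
    have hper : ∀ k, (Real.sign (Λ k):ℂ) * ((|Λ k|:ℝ):ℂ)^(-s)
        = s * ∫ t in Ioi (0:ℝ), g k t := by
      intro k
      rw [step1 k]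
      field_simp
    have swap : ∫ t in Ioi (0:ℝ), ∑' k, g k t = ∑' k, ∫ t in Ioi (0:ℝ), g k t :=
      MeasureTheory.integral_tsum hmeas hne
    have hpt : ∀ t ∈ Ioi (0:ℝ), (∑' k, g k t) = (t:ℂ)^(-s-1) * EtaAux.D Λ t := by
      intro t ht
      have hterm : ∀ k, g k t
          = (if |Λ k| < t then (Real.sign (Λ k) : ℂ) else 0) * (t:ℂ)^(-s-1) := by
        intro k
        rw [hg]
        by_cases hk : |Λ k| < t
        · rw [if_pos hk]
          simp only [indicator_of_mem (mem_Ioi.2 hk)]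
        · rw [if_neg hk]
          simp only [indicator_of_notMem (fun h => hk (mem_Ioi.1 h)), mul_zero, zero_mul]
      rw [tsum_congr hterm, tsum_mul_right,
        EtaAux.tsum_sign_eq hnz hfin (mem_Ioi.1 ht), mul_comm]
    have I1 : IntegrableOn (fun t : ℝ => (t:ℂ)^(-s-1) • f t) (Ioi (0:ℝ)) := by
      have hmc : MellinConvergent f (-s) := by
        refine mellinConvergent_of_isBigO_rpow (a := 2 - (n:ℝ)) (b := -s.re - 1)
          hloc ?_ ?_ ?_ ?_
        · simpa [neg_sub] using htop
        · simp only [Complex.neg_re]; linarith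
        · exact EtaAux.ffun_isBigO_zero hδ0 hδ1 hδ _
        · simp only [Complex.neg_re]; linarith
      exact hmc
    have hwre : (((n:ℂ) - 1 - s) - 1).re < -1 := by
      simp only [Complex.sub_re, Complex.one_re, Complex.natCast_re]
      linarith
    have I2' : IntegrableOn (fun u : ℝ => (u:ℂ)^(((n:ℂ)-1-s) - 1) * (2*(b:ℂ))) (Ioi (1:ℝ)) :=
      (integrableOn_Ioi_cpow_of_lt hwre one_pos).mul_const _
    have I2 : IntegrableOn
        ((Ioi (1:ℝ)).indicator (fun u : ℝ => (u:ℂ)^(((n:ℂ)-1-s) - 1) * (2*(b:ℂ)))) (Ioi (0:ℝ)) :=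
      ((integrable_indicator_iff measurableSet_Ioi).2 I2').integrableOn
    have hptD : EqOn (fun t : ℝ => (t:ℂ)^(-s-1) * EtaAux.D Λ t)
        (fun t : ℝ => (t:ℂ)^(-s-1) • f t
          + (Ioi (1:ℝ)).indicator (fun u : ℝ => (u:ℂ)^(((n:ℂ)-1-s) - 1) * (2*(b:ℂ))) t)
        (Ioi (0:ℝ)) := by
      intro t ht
      have ht0 : (0:ℝ) < t := mem_Ioi.1 ht
      have hne0 : (t:ℂ) ≠ 0 := Complex.ofReal_ne_zero.2 (ne_of_gt ht0)
      simp only [smul_eq_mul, hf, EtaAux.ffun]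
      by_cases h1 : t ≤ 1
      · rw [if_pos h1, indicator_of_notMem (by simp [h1]), add_zero]
      · rw [if_neg h1, indicator_of_mem (mem_Ioi.2 (not_le.1 h1))]
        have hnat : ((t ^ (n-1) : ℝ) : ℂ) = (t:ℂ) ^ ((n:ℂ) - 1) := by
          push_cast
          rw [← Complex.cpow_natCast]
          congr 1
          push_cast [Nat.cast_sub (show 1 ≤ n by omega)]
          ring
        have hcast : ((2 * b * t ^ (n-1) : ℝ) : ℂ) = 2*(b:ℂ) * (t:ℂ)^((n:ℂ)-1) := by
          push_cast [← hnat]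
          push_cast
          ring
        have hmul : (t:ℂ)^(-s-1) * (t:ℂ)^((n:ℂ)-1) = (t:ℂ)^(((n:ℂ)-1-s) - 1) := by
          rw [← Complex.cpow_add _ _ hne0]
          congr 1
          ring
        rw [hcast]
        linear_combination (2*(b:ℂ)) * hmul
    have hIoi1 : ∫ t in Ioi (0:ℝ),
        (Ioi (1:ℝ)).indicator (fun u : ℝ => (u:ℂ)^(((n:ℂ)-1-s) - 1) * (2*(b:ℂ))) t
        = (2*(b:ℂ)) * (1 / (s - ((n:ℂ) - 1))) := by
      rw [integral_indicator measurableSet_Ioi, Measure.restrict_restrict measurableSet_Ioi,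
        inter_eq_left.2 (Ioi_subset_Ioi zero_le_one)]
      rw [MeasureTheory.integral_mul_const, integral_Ioi_cpow_of_lt hwre one_pos]
      rw [show ((n:ℂ)-1-s) - 1 + 1 = (n:ℂ)-1-s by ring]
      rw [Complex.ofReal_one, Complex.one_cpow]
      rw [show (n:ℂ)-1-s = -(s - ((n:ℂ)-1)) by ring, div_neg, neg_div, neg_neg]
      ring
    have split : ∫ t in Ioi (0:ℝ), (t:ℂ)^(-s-1) * EtaAux.D Λ t
        = mellin f (-s) + (2*(b:ℂ)) * (1 / (s - ((n:ℂ) - 1))) := by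
      rw [setIntegral_congr_fun measurableSet_Ioi hptD, integral_add I1 I2, hIoi1]
      rfl
    calc ∑' k, (Real.sign (Λ k) : ℂ) * ((|Λ k| : ℝ) : ℂ) ^ (-s)
        = ∑' k, s * ∫ t in Ioi (0:ℝ), g k t := tsum_congr hper
    _ = s * ∑' k, ∫ t in Ioi (0:ℝ), g k t := tsum_mul_left
    _ = s * ∫ t in Ioi (0:ℝ), ∑' k, g k t := by rw [swap]
    _ = s * ∫ t in Ioi (0:ℝ), (t:ℂ)^(-s-1) * EtaAux.D Λ t := by
        rw [setIntegral_congr_fun measurableSet_Ioi hpt]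
    _ = s * (mellin f (-s) + (2*(b:ℂ)) * (1 / (s - ((n:ℂ) - 1)))) := by rw [split]
    _ = 2 * ((n : ℂ) - 1) * (b : ℂ) / (s - ((n : ℂ) - 1))
        + (2*(b:ℂ) + s * mellin f (-s)) := by
        field_simp
        ring
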